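/- arXiv:2407.07084 — 4 statements merged into one kernel-verified Lean document; each statement's English description precedes it below -/
import Mathlib

section
/- Error lower bound: suppose the differentiable functions {f_i}_{i=1}^n satisfy δ_s-SOD of size s with δ_s > 0. Fix S ⊆ {1,…,n} with |S| = s, a point v ∈ E, a real λ > δ_s, and points x_i ∈ E for i ∈ S; put x̄_S := (1/s)Σ_{i∈S} x_i. Then (1/s)Σ_{i∈S} ⟨∇f_i(x_i) + ∇h_i^S(x̄_S), v − x_i⟩ − (1/(2λ)) ‖(1/s)Σ_{i∈S} ∇f_i(x_i)‖² ≥ ((λ − δ_s)/2)(1/s)Σ_{i∈S} ‖v − x_i‖² − (1/λ)(1/s)Σ_{i∈S} ‖∇F_i(x_i)‖², where ∇F_i(x) := ∇f_i(x) + ∇h_i^S(v) + λ(x − v). -/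
open Finset RealInnerProductSpace

/-- Pure real-arithmetic core of the error lower bound. -/
private lemma key_real (s lam δ A T V W P Q B SD D : ℝ)
    (hs : 0 < s) (hlam : 0 < lam) (hδ : 0 < δ)
    (hA : -P - lam ^ 2 * V ≤ 2 * lam * A)
    (hT : -SD - δ ^ 2 * V ≤ 2 * δ * T)
    (hSD : SD ≤ s * δ ^ 2 * W) (hQ : Q ≤ s * P) (hD : D = s * W + V) :
    (1 / s) * (B + A + T + lam * D)
      - (1 / (2 * lam)) * ((1 / s) ^ 2 * Q + 2 * lam * (1 / s) * B + lam ^ 2 * W)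
    ≥ ((lam - δ) / 2) * ((1 / s) * D) - (1 / lam) * ((1 / s) * P) := by
  have h1 : 0 ≤ (1 / (2 * lam * s)) * (2 * lam * A - (-P - lam ^ 2 * V)) :=
    mul_nonneg (by positivity) (by linarith)
  have h2 : 0 ≤ (1 / (2 * δ * s)) * (2 * δ * T - (-SD - δ ^ 2 * V)) :=
    mul_nonneg (by positivity) (by linarith)
  have h3 : 0 ≤ (1 / (2 * δ * s)) * (s * δ ^ 2 * W - SD) :=
    mul_nonneg (by positivity) (by linarith)
  have h4 : 0 ≤ (1 / (2 * lam * s ^ 2)) * (s * P - Q) :=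
    mul_nonneg (by positivity) (by linarith)
  have key : (1 / s) * (B + A + T + lam * D)
      - (1 / (2 * lam)) * ((1 / s) ^ 2 * Q + 2 * lam * (1 / s) * B + lam ^ 2 * W)
      - (((lam - δ) / 2) * ((1 / s) * D) - (1 / lam) * ((1 / s) * P))
      = (1 / (2 * lam * s)) * (2 * lam * A - (-P - lam ^ 2 * V))
        + (1 / (2 * δ * s)) * (2 * δ * T - (-SD - δ ^ 2 * V))
        + (1 / (2 * δ * s)) * (s * δ ^ 2 * W - SD)
        + (1 / (2 * lam * s ^ 2)) * (s * P - Q) := by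
    subst hD
    field_simp
    ring
  linarith

/-- Young's inequality for the inner product. -/
private lemma young_inner {E : Type*} [NormedAddCommGroup E] [InnerProductSpace ℝ E]
    (a b : E) (t : ℝ) : -‖a‖ ^ 2 - t ^ 2 * ‖b‖ ^ 2 ≤ 2 * t * ⟪a, b⟫ := by
  have h2 : ‖a + t • b‖ ^ 2 = ‖a‖ ^ 2 + 2 * (t * ⟪a, b⟫) + t ^ 2 * ‖b‖ ^ 2 := by
    rw [norm_add_sq_real, real_inner_smul_right, norm_smul]
    simp [mul_pow, sq_abs]
  nlinarith [sq_nonneg ‖a + t • b‖]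

/-- Abstract version of the error lower bound, with the gradients replaced by
arbitrary vectors satisfying the relevant identities and the SOD bound. -/
private lemma main_aux {E : Type*} [NormedAddCommGroup E] [InnerProductSpace ℝ E]
    {ι : Type*} (S : Finset ι) (s : ℕ) (hS : S.card = s) (hs1 : 1 ≤ s)
    (g Hb Hv x : ι → E) (v xbarS : E) (lam δ : ℝ) (hδ : 0 < δ) (hlam : δ < lam)
    (hxbarS : xbarS = (1 / (s : ℝ)) • ∑ i ∈ S, x i)
    (hHb0 : ∑ i ∈ S, Hb i = 0) (hHv0 : ∑ i ∈ S, Hv i = 0)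
    (hSOD' : (1 / (s : ℝ)) * ∑ i ∈ S, ‖Hb i - Hv i‖ ^ 2 ≤ δ ^ 2 * ‖xbarS - v‖ ^ 2) :
    (1 / (s : ℝ)) * ∑ i ∈ S, ⟪g i + Hb i, v - x i⟫
      - (1 / (2 * lam)) * ‖(1 / (s : ℝ)) • ∑ i ∈ S, g i‖ ^ 2
    ≥ ((lam - δ) / 2) * ((1 / (s : ℝ)) * ∑ i ∈ S, ‖v - x i‖ ^ 2)
      - (1 / lam) * ((1 / (s : ℝ)) * ∑ i ∈ S, ‖g i + Hv i + lam • (x i - v)‖ ^ 2) := by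
  have hlam0 : 0 < lam := hδ.trans hlam
  have hs0 : 0 < (s : ℝ) := by exact_mod_cast Nat.lt_of_lt_of_le Nat.zero_lt_one hs1
  have hsne : (s : ℝ) ≠ 0 := ne_of_gt hs0
  set G : ι → E := fun i => g i + Hv i + lam • (x i - v) with hG
  set Δ : ι → E := fun i => Hb i - Hv i with hΔ
  set A : ℝ := ∑ i ∈ S, ⟪G i, xbarS - x i⟫ with hA
  set T : ℝ := ∑ i ∈ S, ⟪Δ i, xbarS - x i⟫ with hT
  set V : ℝ := ∑ i ∈ S, ‖xbarS - x i‖ ^ 2 with hV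
  set W : ℝ := ‖v - xbarS‖ ^ 2 with hW
  set P : ℝ := ∑ i ∈ S, ‖G i‖ ^ 2 with hP
  set Q : ℝ := ‖∑ i ∈ S, G i‖ ^ 2 with hQ
  set B : ℝ := ⟪∑ i ∈ S, G i, v - xbarS⟫ with hB
  set SD : ℝ := ∑ i ∈ S, ‖Δ i‖ ^ 2 with hSDdef
  set D : ℝ := ∑ i ∈ S, ‖v - x i‖ ^ 2 with hD
  -- sum of (xbarS - x i) over S vanishes
  have hsumx : ∑ i ∈ S, x i = (s : ℝ) • xbarS := by
    rw [hxbarS, smul_smul]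
    rw [mul_one_div_cancel hsne, one_smul]
  have e0 : ∑ i ∈ S, (xbarS - x i) = 0 := by
    rw [Finset.sum_sub_distrib, Finset.sum_const, hS, hsumx, ← Nat.cast_smul_eq_nsmul ℝ,
      sub_self]
  -- sum of Δ vanishes
  have eΔ0 : ∑ i ∈ S, Δ i = 0 := by
    simp only [hΔ, Finset.sum_sub_distrib, hHb0, hHv0, sub_zero]
  -- decomposition of the main inner-product sum
  have e1 : ∑ i ∈ S, ⟪g i + Hb i, v - x i⟫
      = (∑ i ∈ S, ⟪G i, v - x i⟫) + (∑ i ∈ S, ⟪Δ i, v - x i⟫) + lam * D := by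
    rw [hD, Finset.mul_sum, ← Finset.sum_add_distrib, ← Finset.sum_add_distrib]
    refine Finset.sum_congr rfl fun i _ => ?_
    have hv : g i + Hb i = G i + Δ i + lam • (v - x i) := by
      simp only [hG, hΔ]
      module
    rw [hv, inner_add_left, inner_add_left, real_inner_smul_left,
      real_inner_self_eq_norm_sq]
  have esplit : ∀ w : ι → E, ∑ i ∈ S, ⟪w i, v - x i⟫
      = ⟪∑ i ∈ S, w i, v - xbarS⟫ + ∑ i ∈ S, ⟪w i, xbarS - x i⟫ := by
    intro w
    rw [sum_inner, ← Finset.sum_add_distrib]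
    refine Finset.sum_congr rfl fun i _ => ?_
    rw [← inner_add_right]
    congr 1
    abel
  have e2 : ∑ i ∈ S, ⟪Δ i, v - x i⟫ = T := by
    rw [esplit, eΔ0, inner_zero_left, zero_add, hT]
  have e3 : ∑ i ∈ S, ⟪G i, v - x i⟫ = B + A := by rw [esplit]
  -- relation between the averages of g and G
  have e4 : ∑ i ∈ S, g i = (∑ i ∈ S, G i) + ((s : ℝ) * lam) • (v - xbarS) := by
    have : ∑ i ∈ S, G i = (∑ i ∈ S, g i) + lam • ((s : ℝ) • xbarS - (s : ℝ) • v) := by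
      simp only [hG, Finset.sum_add_distrib, hHv0, add_zero, ← Finset.smul_sum,
        Finset.sum_sub_distrib, hsumx, Finset.sum_const, hS, ← Nat.cast_smul_eq_nsmul ℝ]
    rw [this]
    module
  have enorm : ‖(1 / (s : ℝ)) • ∑ i ∈ S, g i‖ ^ 2
      = (1 / (s : ℝ)) ^ 2 * Q + 2 * lam * (1 / (s : ℝ)) * B + lam ^ 2 * W := by
    rw [e4, smul_add, smul_smul]
    have hc : (1 / (s : ℝ)) * ((s : ℝ) * lam) = lam := by field_simp
    rw [hc, norm_add_sq_real, real_inner_smul_left, real_inner_smul_right,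
      norm_smul, norm_smul]
    simp only [Real.norm_eq_abs, mul_pow, sq_abs, hQ, hB, hW]
    ring
  -- variance decomposition
  have e5 : D = (s : ℝ) * W + V := by
    have : ∀ i ∈ S, ‖v - x i‖ ^ 2
        = W + 2 * ⟪v - xbarS, xbarS - x i⟫ + ‖xbarS - x i‖ ^ 2 := by
      intro i _
      have : v - x i = (v - xbarS) + (xbarS - x i) := by abel
      rw [this, norm_add_sq_real, hW]
    rw [hD, Finset.sum_congr rfl this, Finset.sum_add_distrib, Finset.sum_add_distrib,
      Finset.sum_const, hS, ← Finset.mul_sum, ← inner_sum, e0, inner_zero_right,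
      nsmul_eq_mul, hV]
    ring
  -- Young bounds
  have hAbound : -P - lam ^ 2 * V ≤ 2 * lam * A := by
    have h : ∑ i ∈ S, (-‖G i‖ ^ 2 - lam ^ 2 * ‖xbarS - x i‖ ^ 2)
        ≤ ∑ i ∈ S, 2 * lam * ⟪G i, xbarS - x i⟫ :=
      Finset.sum_le_sum fun i _ => young_inner _ _ _
    have h1 : ∑ i ∈ S, (-‖G i‖ ^ 2 - lam ^ 2 * ‖xbarS - x i‖ ^ 2)
        = -P - lam ^ 2 * V := by
      rw [Finset.sum_sub_distrib, Finset.sum_neg_distrib, ← Finset.mul_sum, hP, hV]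
    have h2 : ∑ i ∈ S, 2 * lam * ⟪G i, xbarS - x i⟫ = 2 * lam * A := by
      rw [← Finset.mul_sum, hA]
    rw [h1, h2] at h
    exact h
  have hTbound : -SD - δ ^ 2 * V ≤ 2 * δ * T := by
    have h : ∑ i ∈ S, (-‖Δ i‖ ^ 2 - δ ^ 2 * ‖xbarS - x i‖ ^ 2)
        ≤ ∑ i ∈ S, 2 * δ * ⟪Δ i, xbarS - x i⟫ :=
      Finset.sum_le_sum fun i _ => young_inner _ _ _
    have h1 : ∑ i ∈ S, (-‖Δ i‖ ^ 2 - δ ^ 2 * ‖xbarS - x i‖ ^ 2)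
        = -SD - δ ^ 2 * V := by
      rw [Finset.sum_sub_distrib, Finset.sum_neg_distrib, ← Finset.mul_sum, hSDdef, hV]
    have h2 : ∑ i ∈ S, 2 * δ * ⟪Δ i, xbarS - x i⟫ = 2 * δ * T := by
      rw [← Finset.mul_sum, hT]
    rw [h1, h2] at h
    exact h
  -- SOD bound
  have hSDbound : SD ≤ (s : ℝ) * δ ^ 2 * W := by
    have h := hSOD'
    rw [norm_sub_rev xbarS v] at h
    have h2 : (1 / (s : ℝ)) * SD ≤ δ ^ 2 * W := h
    calc SD = (s : ℝ) * ((1 / (s : ℝ)) * SD) := by field_simp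
      _ ≤ (s : ℝ) * (δ ^ 2 * W) := by
          exact mul_le_mul_of_nonneg_left h2 (le_of_lt hs0)
      _ = (s : ℝ) * δ ^ 2 * W := by ring
  -- Jensen / Cauchy–Schwarz bound
  have hQbound : Q ≤ (s : ℝ) * P := by
    have h1 : ‖∑ i ∈ S, G i‖ ≤ ∑ i ∈ S, ‖G i‖ := norm_sum_le _ _
    have h2 : (∑ i ∈ S, ‖G i‖) ^ 2 ≤ (S.card : ℝ) * ∑ i ∈ S, ‖G i‖ ^ 2 :=
      sq_sum_le_card_mul_sum_sq
    rw [hS] at h2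
    have h3 : Q ≤ (∑ i ∈ S, ‖G i‖) ^ 2 := by
      rw [hQ]
      exact pow_le_pow_left₀ (norm_nonneg _) h1 2
    exact h3.trans h2
  -- put everything together
  rw [e1, e2, e3, enorm]
  have := key_real (s : ℝ) lam δ A T V W P Q B SD D hs0 hlam0 hδ hAbound hTbound
    hSDbound hQbound e5
  calc (1 / (s : ℝ)) * (B + A + T + lam * D)
      - (1 / (2 * lam)) * ((1 / (s : ℝ)) ^ 2 * Q + 2 * lam * (1 / (s : ℝ)) * B + lam ^ 2 * W)
      ≥ ((lam - δ) / 2) * ((1 / (s : ℝ)) * D) - (1 / lam) * ((1 / (s : ℝ)) * P) := this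
    _ = ((lam - δ) / 2) * ((1 / (s : ℝ)) * D) - (1 / lam) * ((1 / (s : ℝ)) * P) := rfl

/-- The sum over `S` of the gradients of the `h_i^S` vanishes. -/
private lemma sum_grad_zero {E : Type*} [NormedAddCommGroup E] [InnerProductSpace ℝ E]
    [CompleteSpace E] {n : ℕ} (f' : Fin n → E → ℝ) (hdiff : ∀ i, Differentiable ℝ (f' i))
    (s : ℕ) (hs1 : 1 ≤ s) (S : Finset (Fin n)) (hS : S.card = s) (y : E) :
    ∑ i ∈ S, gradient (fun z => (1 / (s : ℝ)) * (∑ j ∈ S, f' j z) - f' i z) y = 0 := by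
  have hsne : (s : ℝ) ≠ 0 := by
    have : 0 < (s : ℝ) := by exact_mod_cast Nat.lt_of_lt_of_le Nat.zero_lt_one hs1
    exact ne_of_gt this
  have hdi : ∀ i : Fin n, Differentiable ℝ
      (fun z => (1 / (s : ℝ)) * (∑ j ∈ S, f' j z) - f' i z) := fun i =>
    ((Differentiable.fun_sum fun j _ => hdiff j).const_mul _).fun_sub (hdiff i)
  have h1 : ∑ i ∈ S, gradient (fun z => (1 / (s : ℝ)) * (∑ j ∈ S, f' j z) - f' i z) y
      = (InnerProductSpace.toDual ℝ E).symm
          (∑ i ∈ S, fderiv ℝ (fun z => (1 / (s : ℝ)) * (∑ j ∈ S, f' j z) - f' i z) y) := by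
    rw [map_sum]
    rfl
  rw [h1, ← fderiv_fun_sum fun i _ => (hdi i).differentiableAt]
  have h2 : (fun z => ∑ i ∈ S, ((1 / (s : ℝ)) * (∑ j ∈ S, f' j z) - f' i z))
      = fun _ : E => (0 : ℝ) := by
    funext z
    rw [Finset.sum_sub_distrib, Finset.sum_const, hS, nsmul_eq_mul]
    field_simp
    ring
  rw [h2, fderiv_const_apply]
  simp

/-- Error lower bound (Lemma `thm:ErrorLowerBound`). -/
theorem error_lower_bound
    {E : Type*} [NormedAddCommGroup E] [InnerProductSpace ℝ E] [CompleteSpace E]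
    (n : ℕ) (hn : 0 < n)
    (f' : Fin n → E → ℝ) (hdiff : ∀ i, Differentiable ℝ (f' i))
    (s : ℕ) (hs1 : 1 ≤ s) (hsn : s ≤ n)
    (δs : ℝ) (hδs : 0 < δs)
    (hSOD : ∀ S : Finset (Fin n), S.card = s → ∀ x y : E,
      (1 / (s : ℝ)) * ∑ i ∈ S,
          ‖gradient (fun z => (1 / (s : ℝ)) * (∑ j ∈ S, f' j z) - f' i z) x
            - gradient (fun z => (1 / (s : ℝ)) * (∑ j ∈ S, f' j z) - f' i z) y‖ ^ 2
        ≤ δs ^ 2 * ‖x - y‖ ^ 2)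
    (S : Finset (Fin n)) (hS : S.card = s)
    (v : E) (lam : ℝ) (hlam : δs < lam)
    (x : Fin n → E)
    (xbarS : E) (hxbarS : xbarS = (1 / (s : ℝ)) • ∑ i ∈ S, x i) :
    (1 / (s : ℝ)) * ∑ i ∈ S,
        ⟪gradient (f' i) (x i)
            + gradient (fun z => (1 / (s : ℝ)) * (∑ j ∈ S, f' j z) - f' i z) xbarS,
          v - x i⟫
      - (1 / (2 * lam)) * ‖(1 / (s : ℝ)) • ∑ i ∈ S, gradient (f' i) (x i)‖ ^ 2
    ≥ ((lam - δs) / 2) * ((1 / (s : ℝ)) * ∑ i ∈ S, ‖v - x i‖ ^ 2)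
      - (1 / lam) * ((1 / (s : ℝ)) * ∑ i ∈ S,
          ‖gradient (f' i) (x i)
            + gradient (fun z => (1 / (s : ℝ)) * (∑ j ∈ S, f' j z) - f' i z) v
            + lam • (x i - v)‖ ^ 2) := by
  exact main_aux S s hS hs1
    (fun i => gradient (f' i) (x i))
    (fun i => gradient (fun z => (1 / (s : ℝ)) * (∑ j ∈ S, f' j z) - f' i z) xbarS)
    (fun i => gradient (fun z => (1 / (s : ℝ)) * (∑ j ∈ S, f' j z) - f' i z) v)
    x v xbarS lam δs hδs hlam hxbarS
    (sum_grad_zero f' hdiff s hs1 S hS xbarS)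
    (sum_grad_zero f' hdiff s hs1 S hS v)
    (hSOD S hS xbarS v)
end

section
/- Monotone gradient norms of gradient descent: let f : E → ℝ be convex, differentiable, and L-smooth with L > 0, and for x ∈ E let x⁺ := x − (1/L)∇f(x). Then ‖∇f(x⁺)‖² ≤ ‖∇f(x)‖² − ‖∇f(x⁺) − ∇f(x)‖²; in particular ‖∇f(x⁺)‖ ≤ ‖∇f(x)‖, so gradient norms along gradient descent with constant stepsize 1/L are non-increasing. -/
open RealInnerProductSpace

section Aux

variable {E : Type*} [NormedAddCommGroup E] [InnerProductSpace ℝ E] [CompleteSpace E]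

private lemma curve_hasDerivAt (f : E → ℝ) (hdiff : Differentiable ℝ f) (x v : E) (t : ℝ) :
    HasDerivAt (fun s : ℝ => f (x + s • v)) ⟪gradient f (x + t • v), v⟫ t := by
  have hc : HasDerivAt (fun s : ℝ => x + s • v) v t := by
    simpa using ((hasDerivAt_id t).smul_const v).const_add x
  have hf := (hdiff (x + t • v)).hasGradientAt.hasFDerivAt
  simpa [Function.comp_def] using hf.comp_hasDerivAt t hc

/-- Descent lemma. -/
private lemma descent (f : E → ℝ) (hdiff : Differentiable ℝ f)
    (L : ℝ) (hL : 0 < L)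
    (hsmooth : ∀ x y : E, ‖gradient f x - gradient f y‖ ≤ L * ‖x - y‖)
    (x y : E) :
    f y ≤ f x + ⟪gradient f x, y - x⟫ + L / 2 * ‖y - x‖ ^ 2 := by
  set v := y - x with hv
  set g : ℝ → ℝ := fun t => f (x + t • v) - t * ⟪gradient f x, v⟫ - L / 2 * t ^ 2 * ‖v‖ ^ 2
    with hg
  have hgd : ∀ t : ℝ, HasDerivAt g
      (⟪gradient f (x + t • v), v⟫ - ⟪gradient f x, v⟫ - L * t * ‖v‖ ^ 2) t := by
    intro t
    have h1 := curve_hasDerivAt f hdiff x v t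
    have h2 : HasDerivAt (fun s : ℝ => s * ⟪gradient f x, v⟫) ⟪gradient f x, v⟫ t := by
      simpa using (hasDerivAt_id t).mul_const ⟪gradient f x, v⟫
    have h3 : HasDerivAt (fun s : ℝ => L / 2 * s ^ 2 * ‖v‖ ^ 2) (L * t * ‖v‖ ^ 2) t := by
      have := ((hasDerivAt_pow 2 t).const_mul (L / 2)).mul_const (‖v‖ ^ 2)
      exact this.congr_deriv (by rw [show (2:ℕ) - 1 = 1 from rfl]; push_cast; ring)
    exact (h1.sub h2).sub h3
  have hanti : AntitoneOn g (Set.Icc 0 1) := by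
    apply antitoneOn_of_deriv_nonpos (convex_Icc 0 1)
    · exact fun t _ => ((hgd t).continuousAt).continuousWithinAt
    · intro t ht
      exact ((hgd t).differentiableAt).differentiableWithinAt
    · intro t ht
      rw [interior_Icc] at ht
      rw [(hgd t).deriv]
      have hcs : ⟪gradient f (x + t • v) - gradient f x, v⟫ ≤
          ‖gradient f (x + t • v) - gradient f x‖ * ‖v‖ :=
        real_inner_le_norm _ _
      have hsm : ‖gradient f (x + t • v) - gradient f x‖ ≤ L * (t * ‖v‖) := by
        have := hsmooth (x + t • v) x
        have hnorm : ‖x + t • v - x‖ = t * ‖v‖ := by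
          rw [add_sub_cancel_left, norm_smul, Real.norm_eq_abs, abs_of_pos ht.1]
        rw [hnorm] at this
        exact this
      have : ⟪gradient f (x + t • v), v⟫ - ⟪gradient f x, v⟫ ≤ L * t * ‖v‖ ^ 2 := by
        rw [← inner_sub_left]
        calc ⟪gradient f (x + t • v) - gradient f x, v⟫
            ≤ ‖gradient f (x + t • v) - gradient f x‖ * ‖v‖ := hcs
          _ ≤ L * (t * ‖v‖) * ‖v‖ := by
              apply mul_le_mul_of_nonneg_right hsm (norm_nonneg v)
          _ = L * t * ‖v‖ ^ 2 := by ring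
      linarith
  have h01 := hanti (Set.left_mem_Icc.2 zero_le_one) (Set.right_mem_Icc.2 zero_le_one)
    zero_le_one
  simp only [hg, zero_smul, add_zero, one_smul, zero_mul, one_mul, zero_pow, one_pow,
    mul_zero, sub_zero, mul_one] at h01
  have hy : x + v = y := by rw [hv]; abel
  rw [hy] at h01
  linarith

/-- Lower quadratic bound from convexity + smoothness. -/
private lemma lower_bound (f : E → ℝ) (hdiff : Differentiable ℝ f)
    (hconv : ∀ x y : E, f y ≥ f x + ⟪gradient f x, y - x⟫)
    (L : ℝ) (hL : 0 < L)
    (hsmooth : ∀ x y : E, ‖gradient f x - gradient f y‖ ≤ L * ‖x - y‖)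
    (x y : E) :
    f x + ⟪gradient f x, y - x⟫ + 1 / (2 * L) * ‖gradient f y - gradient f x‖ ^ 2 ≤ f y := by
  set d := gradient f y - gradient f x with hd
  set z := y - (1 / L) • d with hz
  have h1 : f x + ⟪gradient f x, z - x⟫ ≤ f z := hconv x z
  have h2 : f z ≤ f y + ⟪gradient f y, z - y⟫ + L / 2 * ‖z - y‖ ^ 2 :=
    descent f hdiff L hL hsmooth y z
  have hzy : z - y = -((1 / L) • d) := by rw [hz]; abel
  have hzx : z - x = (y - x) - (1 / L) • d := by rw [hz]; abel
  have e1 : ⟪gradient f y, z - y⟫ = -(1 / L) * ⟪gradient f y, d⟫ := by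
    rw [hzy, inner_neg_right, real_inner_smul_right]; ring
  have e2 : ‖z - y‖ ^ 2 = (1 / L) ^ 2 * ‖d‖ ^ 2 := by
    rw [hzy, norm_neg, norm_smul, mul_pow, Real.norm_eq_abs, sq_abs]
  have e3 : ⟪gradient f x, z - x⟫ = ⟪gradient f x, y - x⟫ - (1 / L) * ⟪gradient f x, d⟫ := by
    rw [hzx, inner_sub_right, real_inner_smul_right]
  have e4 : ⟪gradient f y, d⟫ - ⟪gradient f x, d⟫ = ‖d‖ ^ 2 := by
    rw [← inner_sub_left, ← hd, real_inner_self_eq_norm_sq]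
  have hLne : (L : ℝ) ≠ 0 := ne_of_gt hL
  rw [e3] at h1
  rw [e1, e2] at h2
  have : f x + ⟪gradient f x, y - x⟫ - (1 / L) * ⟪gradient f x, d⟫ ≤
      f y + -(1 / L) * ⟪gradient f y, d⟫ + L / 2 * ((1 / L) ^ 2 * ‖d‖ ^ 2) := by linarith
  have hrw : (1 : ℝ) / (2 * L) * ‖d‖ ^ 2 =
      (1 / L) * (⟪gradient f y, d⟫ - ⟪gradient f x, d⟫) - L / 2 * ((1 / L) ^ 2 * ‖d‖ ^ 2) := by
    rw [e4]; field_simp; ring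
  linarith [this, hrw.le, hrw.ge]

private lemma cocoercive (f : E → ℝ) (hdiff : Differentiable ℝ f)
    (hconv : ∀ x y : E, f y ≥ f x + ⟪gradient f x, y - x⟫)
    (L : ℝ) (hL : 0 < L)
    (hsmooth : ∀ x y : E, ‖gradient f x - gradient f y‖ ≤ L * ‖x - y‖)
    (x y : E) :
    (1 / L) * ‖gradient f y - gradient f x‖ ^ 2 ≤ ⟪gradient f y - gradient f x, y - x⟫ := by
  have h1 := lower_bound f hdiff hconv L hL hsmooth x y
  have h2 := lower_bound f hdiff hconv L hL hsmooth y x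
  have e1 : ⟪gradient f y - gradient f x, y - x⟫ =
      ⟪gradient f y, y - x⟫ - ⟪gradient f x, y - x⟫ := by rw [inner_sub_left]
  have e2 : ⟪gradient f y, x - y⟫ = -⟪gradient f y, y - x⟫ := by
    rw [← inner_neg_right]; congr 1; abel
  have e3 : ‖gradient f x - gradient f y‖ = ‖gradient f y - gradient f x‖ := by
    rw [← norm_neg]; congr 1; abel
  rw [e2, e3] at h2
  have hLpos : (0:ℝ) < 1 / (2 * L) := by positivity
  have : (1 : ℝ) / L = 2 * (1 / (2 * L)) := by field_simp
  rw [e1, this]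
  linarith

end Aux

/-- Gradient norms are non-increasing along gradient descent with stepsize `1/L`
(Lemma `thm:GD-GradNorm`). -/
theorem gd_gradient_norm_monotone
    {E : Type*} [NormedAddCommGroup E] [InnerProductSpace ℝ E] [CompleteSpace E]
    (f : E → ℝ) (hdiff : Differentiable ℝ f)
    (hconv : ∀ x y : E, f y ≥ f x + ⟪gradient f x, y - x⟫)
    (L : ℝ) (hL : 0 < L)
    (hsmooth : ∀ x y : E, ‖gradient f x - gradient f y‖ ≤ L * ‖x - y‖)
    (x : E) (xplus : E) (hxplus : xplus = x - (1 / L) • gradient f x) :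
    ‖gradient f xplus‖ ^ 2
        ≤ ‖gradient f x‖ ^ 2 - ‖gradient f xplus - gradient f x‖ ^ 2 ∧
    ‖gradient f xplus‖ ≤ ‖gradient f x‖ := by
  set g := gradient f x with hgx
  set gp := gradient f xplus with hgp
  set d := gp - g with hd
  have hco := cocoercive f hdiff hconv L hL hsmooth x xplus
  have hxx : xplus - x = -((1 / L) • g) := by rw [hxplus]; abel
  have e1 : ⟪gp - g, xplus - x⟫ = -(1 / L) * ⟪d, g⟫ := by
    rw [hxx, inner_neg_right, real_inner_smul_right, ← hd, real_inner_comm]; ring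
  rw [e1, ← hd] at hco
  have hLpos : (0:ℝ) < 1 / L := by positivity
  have hdg : ⟪d, g⟫ ≤ -‖d‖ ^ 2 := by
    have := hco
    nlinarith
  have hexp : ‖gp‖ ^ 2 = ‖g‖ ^ 2 + 2 * ⟪d, g⟫ + ‖d‖ ^ 2 := by
    have : gp = g + d := by rw [hd]; abel
    rw [this, ← real_inner_self_eq_norm_sq, ← real_inner_self_eq_norm_sq,
      ← real_inner_self_eq_norm_sq]
    rw [inner_add_add_self]
    rw [real_inner_comm g d]
    ring
  have h1 : ‖gp‖ ^ 2 ≤ ‖g‖ ^ 2 - ‖d‖ ^ 2 := by linarith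
  refine ⟨h1, ?_⟩
  nlinarith [norm_nonneg gp, norm_nonneg g, sq_nonneg ‖d‖]
end

section
/- If each f_i : E → ℝ is differentiable, convex, and L-smooth, then for every s ∈ {1,…,n}, every subset S ⊆ {1,…,n} with |S| = s, and all x, y ∈ E: (1/s)Σ_{i∈S} ‖∇h_i^S(x) − ∇h_i^S(y)‖² ≤ L²‖x − y‖²; that is, {f_i} have δ_s-SOD of size s with δ_s = L. -/
open Finset RealInnerProductSpace

lemma grad_comb {E : Type*} [NormedAddCommGroup E] [InnerProductSpace ℝ E] [CompleteSpace E]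
    {n : ℕ} (f' : Fin n → E → ℝ) (hdiff : ∀ i, Differentiable ℝ (f' i))
    (c : ℝ) (S : Finset (Fin n)) (i : Fin n) (z : E) :
    gradient (fun w => c * (∑ j ∈ S, f' j w) - f' i w) z
      = c • (∑ j ∈ S, gradient (f' j) z) - gradient (f' i) z := by
  unfold gradient
  rw [fderiv_fun_sub, fderiv_const_mul, fderiv_fun_sum]
  · simp [map_sub, map_smul, map_sum]
  · intro j _; exact (hdiff j).differentiableAt
  · exact (Differentiable.fun_sum fun j _ => hdiff j).differentiableAt
  · exact (Differentiable.const_mul (Differentiable.fun_sum fun j _ => hdiff j) c).differentiableAt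
  · exact (hdiff i).differentiableAt

/-- Convex `L`-smooth individual functions have `δ_s`-SOD of size `s` with `δ_s = L`. -/
theorem convex_smooth_implies_SOD_L
    {E : Type*} [NormedAddCommGroup E] [InnerProductSpace ℝ E] [CompleteSpace E]
    (n : ℕ) (hn : 0 < n)
    (f' : Fin n → E → ℝ) (hdiff : ∀ i, Differentiable ℝ (f' i))
    (hconv : ∀ i, ∀ x y : E, f' i y ≥ f' i x + ⟪gradient (f' i) x, y - x⟫)
    (L : ℝ) (hL : 0 < L)
    (hsmooth : ∀ i, ∀ x y : E,
      ‖gradient (f' i) x - gradient (f' i) y‖ ≤ L * ‖x - y‖) :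
    ∀ s : ℕ, 1 ≤ s → s ≤ n → ∀ S : Finset (Fin n), S.card = s → ∀ x y : E,
      (1 / (s : ℝ)) * ∑ i ∈ S,
          ‖gradient (fun z => (1 / (s : ℝ)) * (∑ j ∈ S, f' j z) - f' i z) x
            - gradient (fun z => (1 / (s : ℝ)) * (∑ j ∈ S, f' j z) - f' i z) y‖ ^ 2
        ≤ L ^ 2 * ‖x - y‖ ^ 2 := by
  intro s hs1 hsn S hcard x y
  have hspos : (0 : ℝ) < (s : ℝ) := by exact_mod_cast hs1
  set c : ℝ := 1 / (s : ℝ) with hc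
  have hcpos : 0 < c := by positivity
  set g : Fin n → E := fun i => gradient (f' i) x - gradient (f' i) y with hg
  set T : E := ∑ j ∈ S, g j with hT
  have hrw : ∀ i ∈ S,
      ‖gradient (fun z => c * (∑ j ∈ S, f' j z) - f' i z) x
        - gradient (fun z => c * (∑ j ∈ S, f' j z) - f' i z) y‖ ^ 2
      = ‖c • T - g i‖ ^ 2 := by
    intro i _
    rw [grad_comb f' hdiff c S i x, grad_comb f' hdiff c S i y]
    congr 2
    rw [hT, hg]
    simp only [Finset.sum_sub_distrib, smul_sub]
    abel
  rw [Finset.sum_congr rfl hrw]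
  have key : ∑ i ∈ S, ‖c • T - g i‖ ^ 2
      = (s : ℝ) * (c ^ 2 * ‖T‖ ^ 2) - 2 * (c * ‖T‖ ^ 2) + ∑ i ∈ S, ‖g i‖ ^ 2 := by
    have h1 : ∀ i ∈ S, ‖c • T - g i‖ ^ 2
        = c ^ 2 * ‖T‖ ^ 2 - 2 * (c * ⟪T, g i⟫) + ‖g i‖ ^ 2 := by
      intro i _
      rw [norm_sub_sq_real, real_inner_smul_left, norm_smul]
      rw [Real.norm_eq_abs, abs_of_pos hcpos]
      ring
    have hinner : ∑ i ∈ S, ⟪T, g i⟫ = ‖T‖ ^ 2 := by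
      rw [← inner_sum, ← hT, real_inner_self_eq_norm_sq]
    have h3 : ∑ i ∈ S, 2 * (c * ⟪T, g i⟫) = 2 * (c * ‖T‖ ^ 2) := by
      rw [← Finset.mul_sum, ← Finset.mul_sum, hinner]
    rw [Finset.sum_congr rfl h1, Finset.sum_add_distrib, Finset.sum_sub_distrib, h3,
      Finset.sum_const, hcard, nsmul_eq_mul]
  rw [key]
  have hsc : (s : ℝ) * c = 1 := by rw [hc]; field_simp
  have hbound : ∑ i ∈ S, ‖g i‖ ^ 2 ≤ (s : ℝ) * (L ^ 2 * ‖x - y‖ ^ 2) := by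
    calc ∑ i ∈ S, ‖g i‖ ^ 2 ≤ ∑ i ∈ S, (L * ‖x - y‖) ^ 2 := by
          apply Finset.sum_le_sum
          intro i _
          have := hsmooth i x y
          exact pow_le_pow_left₀ (norm_nonneg _) this 2
      _ = (s : ℝ) * (L ^ 2 * ‖x - y‖ ^ 2) := by
          rw [Finset.sum_const, hcard]; push_cast; ring
  have hneg : (s : ℝ) * (c ^ 2 * ‖T‖ ^ 2) - 2 * (c * ‖T‖ ^ 2) ≤ 0 := by
    have h4 : (s : ℝ) * (c ^ 2 * ‖T‖ ^ 2) = ((s : ℝ) * c) * (c * ‖T‖ ^ 2) := by ring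
    rw [h4, hsc, one_mul]
    have h5 : 0 ≤ c * ‖T‖ ^ 2 := by positivity
    linarith
  calc c * ((s : ℝ) * (c ^ 2 * ‖T‖ ^ 2) - 2 * (c * ‖T‖ ^ 2) + ∑ i ∈ S, ‖g i‖ ^ 2)
      ≤ c * ((s : ℝ) * (L ^ 2 * ‖x - y‖ ^ 2)) := by
        apply mul_le_mul_of_nonneg_left _ hcpos.le
        linarith
    _ = L ^ 2 * ‖x - y‖ ^ 2 := by
        rw [← mul_assoc, mul_comm c, hsc, one_mul]
end

section
/- If each f_i : E → ℝ is differentiable, convex, and L-smooth, then for every s ∈ {1,…,n}, every subset S ⊆ {1,…,n} with |S| = s, and all x, y ∈ E: ‖∇m_S(x) − ∇m_S(y)‖ ≤ L‖x − y‖, where m_S := f − f_S; that is, {f_i} have Δ_s-ED of size s with Δ_s = L. -/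
open Finset RealInnerProductSpace

section helpers
variable {E : Type*} [NormedAddCommGroup E] [InnerProductSpace ℝ E] [CompleteSpace E]

lemma hasGradientAt_sum_mul {ι : Type*} (T : Finset ι) (c : ι → ℝ) (g : ι → E → ℝ)
    (v : ι → E) (x : E) (h : ∀ i ∈ T, HasGradientAt (g i) (v i) x) :
    HasGradientAt (fun z => ∑ i ∈ T, c i * g i z) (∑ i ∈ T, c i • v i) x := by
  rw [hasGradientAt_iff_hasFDerivAt, map_sum]
  refine HasFDerivAt.fun_sum (fun i hi => ?_)
  have h1 : (InnerProductSpace.toDual ℝ E) (c i • v i)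
      = c i • (InnerProductSpace.toDual ℝ E) (v i) := by
    simp
  rw [h1]
  exact ((hasGradientAt_iff_hasFDerivAt.mp (h i hi))).const_mul (c i)

lemma descent_lemma (g : E → ℝ) (hd : Differentiable ℝ g) (L : ℝ) (hL : 0 < L)
    (hs : ∀ x y : E, ‖gradient g x - gradient g y‖ ≤ L * ‖x - y‖) (y z : E) :
    g z ≤ g y + ⟪gradient g y, z - y⟫ + L / 2 * ‖z - y‖ ^ 2 := by
  set d := z - y with hd_def
  have hgrad_cont : Continuous (fun w => gradient g w) := by
    have : LipschitzWith (Real.toNNReal L) (fun w => gradient g w) := by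
      apply LipschitzWith.of_dist_le_mul
      intro a b
      simpa [dist_eq_norm, Real.coe_toNNReal _ hL.le] using hs a b
    exact this.continuous
  set φ' : ℝ → ℝ := fun t => ⟪gradient g (y + t • d), d⟫ with hφ'
  have hderiv : ∀ t : ℝ, HasDerivAt (fun t => g (y + t • d)) (φ' t) t := by
    intro t
    have hc : HasDerivAt (fun t : ℝ => y + t • d) d t := by
      simpa using ((hasDerivAt_id t).smul_const d).const_add y
    have hg := (hd (y + t • d)).hasGradientAt
    rw [hasGradientAt_iff_hasFDerivAt] at hg
    have := hg.comp_hasDerivAt t hc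
    simpa [φ', InnerProductSpace.toDual_apply_apply, Function.comp_def] using this
  have hφcont : Continuous φ' := by
    exact (hgrad_cont.comp (by continuity)).inner continuous_const
  have key : g z - g y = ∫ t in (0:ℝ)..1, φ' t := by
    rw [intervalIntegral.integral_eq_sub_of_hasDerivAt (fun t _ => hderiv t)
      (hφcont.intervalIntegrable 0 1)]
    simp [hd_def]
  have hbound : ∀ t ∈ Set.Icc (0:ℝ) 1, φ' t - φ' 0 ≤ (L * ‖d‖ ^ 2) * t := by
    intro t ht
    have h1 : φ' t - φ' 0 = ⟪gradient g (y + t • d) - gradient g (y + (0:ℝ) • d), d⟫ := by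
      simp [φ', inner_sub_left]
    rw [h1]
    calc ⟪gradient g (y + t • d) - gradient g (y + (0:ℝ) • d), d⟫
        ≤ ‖gradient g (y + t • d) - gradient g (y + (0:ℝ) • d)‖ * ‖d‖ :=
          real_inner_le_norm _ _
      _ ≤ (L * ‖(y + t • d) - (y + (0:ℝ) • d)‖) * ‖d‖ := by
          gcongr; exact hs _ _
      _ = (L * ‖d‖ ^ 2) * t := by
          have : (y + t • d) - (y + (0:ℝ) • d) = t • d := by abel_nf; simp [two_smul]
          rw [this, norm_smul]
          simp [abs_of_nonneg ht.1]
          ring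
  have hmono : ∫ t in (0:ℝ)..1, (φ' t - φ' 0) ≤ ∫ t in (0:ℝ)..1, (L * ‖d‖ ^ 2) * t := by
    apply intervalIntegral.integral_mono_on (by norm_num)
      ((hφcont.sub continuous_const).intervalIntegrable 0 1)
      ((continuous_const.mul continuous_id).intervalIntegrable 0 1)
      hbound
  have heval : ∫ t in (0:ℝ)..1, (L * ‖d‖ ^ 2) * t = L / 2 * ‖d‖ ^ 2 := by
    rw [intervalIntegral.integral_const_mul, integral_id]
    ring
  have hsub : ∫ t in (0:ℝ)..1, (φ' t - φ' 0)
      = (∫ t in (0:ℝ)..1, φ' t) - φ' 0 := by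
    rw [intervalIntegral.integral_sub (hφcont.intervalIntegrable 0 1)
      (intervalIntegrable_const)]
    simp
  have hφ0 : φ' 0 = ⟪gradient g y, z - y⟫ := by simp [φ', hd_def]
  rw [hsub, heval, ← key, hφ0] at hmono
  linarith

lemma coco_lemma (g : E → ℝ) (hd : Differentiable ℝ g)
    (hconv : ∀ x y : E, g y ≥ g x + ⟪gradient g x, y - x⟫)
    (L : ℝ) (hL : 0 < L)
    (hs : ∀ x y : E, ‖gradient g x - gradient g y‖ ≤ L * ‖x - y‖) (x y : E) :
    ‖gradient g x - gradient g y‖ ^ 2 ≤ L * ⟪gradient g x - gradient g y, x - y⟫ := by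
  have B : ∀ a b : E, (1 / (2*L)) * ‖gradient g b - gradient g a‖ ^ 2
      ≤ g b - g a - ⟪gradient g a, b - a⟫ := by
    intro a b
    set w := gradient g b - gradient g a with hw
    set z := b - (1/L) • w with hz
    have h1 := hconv a z
    have h2 := descent_lemma g hd L hL hs b z
    have hzb : z - b = -((1/L) • w) := by rw [hz]; abel
    have hza : z - a = (b - a) - (1/L) • w := by rw [hz]; abel
    rw [hzb] at h2
    rw [hza] at h1
    have e1 : ⟪gradient g b, -((1/L) • w)⟫ = -(1/L) * ⟪gradient g b, w⟫ := by
      rw [inner_neg_right, real_inner_smul_right]; ring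
    have e2 : ‖-((1/L) • w)‖ ^ 2 = (1/L)^2 * ‖w‖ ^ 2 := by
      rw [norm_neg, norm_smul, Real.norm_eq_abs, abs_of_pos (by positivity : (0:ℝ) < 1/L)]
      ring
    have e3 : ⟪gradient g a, (b - a) - (1/L) • w⟫
        = ⟪gradient g a, b - a⟫ - (1/L) * ⟪gradient g a, w⟫ := by
      rw [inner_sub_right, real_inner_smul_right]
    rw [e1, e2] at h2
    rw [e3] at h1
    have e4 : ⟪gradient g b, w⟫ - ⟪gradient g a, w⟫ = ‖w‖ ^ 2 := by
      rw [← inner_sub_left, ← hw, real_inner_self_eq_norm_sq]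
    have hL' : L ≠ 0 := ne_of_gt hL
    have e5 : 1/L * ⟪gradient g b, w⟫ - 1/L * ⟪gradient g a, w⟫ = 1/L * ‖w‖ ^ 2 := by
      rw [← mul_sub, e4]
    have e6 : L / 2 * ((1/L) ^ 2 * ‖w‖ ^ 2) = 1 / (2*L) * ‖w‖ ^ 2 := by
      field_simp
    have e7 : 1/L * ‖w‖ ^ 2 = 2 * (1 / (2*L) * ‖w‖ ^ 2) := by
      field_simp
    linarith [h1, h2, e5, e6, e7]
  have Bxy := B x y
  have Byx := B y x
  have hrev : ‖gradient g y - gradient g x‖ = ‖gradient g x - gradient g y‖ :=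
    norm_sub_rev _ _
  rw [hrev] at Bxy
  have hsum : ⟪gradient g x - gradient g y, x - y⟫
      = (g x - g y - ⟪gradient g y, x - y⟫) + (g y - g x - ⟪gradient g x, y - x⟫) := by
    rw [inner_sub_left]
    have : (y : E) - x = -(x - y) := by abel
    rw [this, inner_neg_right]
    ring
  have h1' := mul_le_mul_of_nonneg_left Bxy hL.le
  have h2' := mul_le_mul_of_nonneg_left Byx hL.le
  have e : L * (1 / (2*L) * ‖gradient g x - gradient g y‖ ^ 2)
      = ‖gradient g x - gradient g y‖ ^ 2 / 2 := by
    field_simp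
  rw [e] at h1' h2'
  rw [hsum, mul_add]
  linarith

end helpers


section helpers2
variable {E : Type*} [NormedAddCommGroup E] [InnerProductSpace ℝ E] [CompleteSpace E]

lemma avg_coco {ι : Type*} (T : Finset ι) (hT : T.Nonempty) (w : ι → E) (d : E)
    (L : ℝ) (hL : 0 < L) (h : ∀ i ∈ T, ‖w i‖ ^ 2 ≤ L * ⟪w i, d⟫) :
    ‖((T.card : ℝ))⁻¹ • ∑ i ∈ T, w i‖ ^ 2
      ≤ L * ⟪((T.card : ℝ))⁻¹ • ∑ i ∈ T, w i, d⟫ := by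
  have hm : (0:ℝ) < (T.card : ℝ) := by
    exact_mod_cast Finset.card_pos.mpr hT
  have h1 : ‖∑ i ∈ T, w i‖ ^ 2 ≤ (T.card : ℝ) * ∑ i ∈ T, ‖w i‖ ^ 2 := by
    calc ‖∑ i ∈ T, w i‖ ^ 2 ≤ (∑ i ∈ T, ‖w i‖) ^ 2 := by
          apply pow_le_pow_left₀ (norm_nonneg _) (norm_sum_le _ _)
      _ ≤ (T.card : ℝ) * ∑ i ∈ T, ‖w i‖ ^ 2 := by
          have := sq_sum_le_card_mul_sum_sq (s := T) (f := fun i => ‖w i‖)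
          exact_mod_cast this
  have h2 : ∑ i ∈ T, ‖w i‖ ^ 2 ≤ L * ⟪∑ i ∈ T, w i, d⟫ := by
    rw [sum_inner, Finset.mul_sum]
    exact Finset.sum_le_sum h
  rw [norm_smul, Real.norm_eq_abs, abs_of_pos (by positivity), mul_pow,
    real_inner_smul_left]
  calc ((T.card : ℝ))⁻¹ ^ 2 * ‖∑ i ∈ T, w i‖ ^ 2
      ≤ ((T.card : ℝ))⁻¹ ^ 2 * ((T.card : ℝ) * (L * ⟪∑ i ∈ T, w i, d⟫)) := by
        gcongr
        calc ‖∑ i ∈ T, w i‖ ^ 2 ≤ (T.card : ℝ) * ∑ i ∈ T, ‖w i‖ ^ 2 := h1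
          _ ≤ (T.card : ℝ) * (L * ⟪∑ i ∈ T, w i, d⟫) := by gcongr
    _ = L * (((T.card : ℝ))⁻¹ * ⟪∑ i ∈ T, w i, d⟫) := by
        field_simp

lemma two_coco_combine (u v d : E) (L : ℝ) (hL : 0 < L)
    (hu : ‖u‖ ^ 2 ≤ L * ⟪u, d⟫) (hv : ‖v‖ ^ 2 ≤ L * ⟪v, d⟫) :
    ‖u - v‖ ≤ L * ‖d‖ := by
  have h0 : (0:ℝ) ≤ ‖(u + v) - L • d‖ ^ 2 := sq_nonneg _
  have e1 : ‖(u + v) - L • d‖ ^ 2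
      = ‖u + v‖ ^ 2 - 2 * ⟪u + v, L • d⟫ + ‖L • d‖ ^ 2 := by
    rw [norm_sub_sq_real]
  have e2 : ‖u + v‖ ^ 2 = ‖u‖ ^ 2 + 2 * ⟪u, v⟫ + ‖v‖ ^ 2 := norm_add_sq_real u v
  have e3 : ⟪u + v, L • d⟫ = L * ⟪u, d⟫ + L * ⟪v, d⟫ := by
    rw [inner_add_left, real_inner_smul_right, real_inner_smul_right]
  have e4 : ‖L • d‖ ^ 2 = L ^ 2 * ‖d‖ ^ 2 := by
    rw [norm_smul, Real.norm_eq_abs, abs_of_pos hL, mul_pow]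
  have e5 : ‖u - v‖ ^ 2 = ‖u‖ ^ 2 - 2 * ⟪u, v⟫ + ‖v‖ ^ 2 := norm_sub_sq_real u v
  have hsq : ‖u - v‖ ^ 2 ≤ (L * ‖d‖) ^ 2 := by
    rw [e1, e2, e3, e4] at h0
    nlinarith [hu, hv, h0, e5]
  have hnn : (0:ℝ) ≤ L * ‖d‖ := mul_nonneg hL.le (norm_nonneg d)
  nlinarith [hsq, norm_nonneg (u - v), hnn]

end helpers2


/-- Convex `L`-smooth individual functions have `Δ_s`-ED of size `s` with `Δ_s = L`. -/
theorem convex_smooth_implies_ED_L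
    {E : Type*} [NormedAddCommGroup E] [InnerProductSpace ℝ E] [CompleteSpace E]
    (n : ℕ) (hn : 0 < n)
    (f' : Fin n → E → ℝ) (hdiff : ∀ i, Differentiable ℝ (f' i))
    (f : E → ℝ) (hfdef : f = fun x => (1 / (n : ℝ)) * ∑ i, f' i x)
    (hconv : ∀ i, ∀ x y : E, f' i y ≥ f' i x + ⟪gradient (f' i) x, y - x⟫)
    (L : ℝ) (hL : 0 < L)
    (hsmooth : ∀ i, ∀ x y : E,
      ‖gradient (f' i) x - gradient (f' i) y‖ ≤ L * ‖x - y‖) :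
    ∀ s : ℕ, 1 ≤ s → s ≤ n → ∀ S : Finset (Fin n), S.card = s → ∀ x y : E,
      ‖gradient (fun z => f z - (1 / (s : ℝ)) * ∑ j ∈ S, f' j z) x
          - gradient (fun z => f z - (1 / (s : ℝ)) * ∑ j ∈ S, f' j z) y‖
        ≤ L * ‖x - y‖ := by
  intro s hs1 hsn S hScard x y
  subst hfdef
  set c : Fin n → ℝ := fun i => 1/(n:ℝ) - (if i ∈ S then 1/(s:ℝ) else 0) with hc
  have hfun : (fun z => (1 / (n:ℝ)) * ∑ i, f' i z - (1 / (s : ℝ)) * ∑ j ∈ S, f' j z)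
      = fun z => ∑ i, c i * f' i z := by
    funext z
    simp only [hc, sub_mul, ite_mul, zero_mul, Finset.sum_sub_distrib]
    congr 1
    · rw [Finset.mul_sum]
    · rw [Finset.sum_ite_mem, Finset.univ_inter, Finset.mul_sum]
  have hgrad : ∀ z : E, gradient (fun z => ∑ i, c i * f' i z) z
      = ∑ i, c i • gradient (f' i) z := by
    intro z
    exact (hasGradientAt_sum_mul univ c f' (fun i => gradient (f' i) z) z
      (fun i _ => ((hdiff i) z).hasGradientAt)).gradient
  rw [hfun, hgrad x, hgrad y, ← Finset.sum_sub_distrib]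
  have hsmul : ∀ i : Fin n, c i • gradient (f' i) x - c i • gradient (f' i) y
      = c i • (gradient (f' i) x - gradient (f' i) y) := fun i => (smul_sub _ _ _).symm
  simp only [hsmul]
  set u : Fin n → E := fun i => gradient (f' i) x - gradient (f' i) y with hu
  set d : E := x - y with hd
  by_cases hcase : s = n
  · -- S = univ, each c i = 0
    have hSuniv : S = univ := Finset.eq_univ_of_card S (by rw [hScard, hcase]; simp)
    have hzero : ∀ i : Fin n, c i = 0 := by
      intro i
      simp [hc, hSuniv, hcase]
    simp only [hzero, zero_smul, Finset.sum_const_zero, norm_zero]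
    positivity
  · -- s < n
    have hslt : s < n := lt_of_le_of_ne hsn hcase
    have hcompl_card : Sᶜ.card = n - s := by
      rw [Finset.card_compl, hScard]; simp
    have hcompl_ne : Sᶜ.Nonempty := by
      rw [← Finset.card_pos, hcompl_card]; omega
    have hS_ne : S.Nonempty := by
      rw [← Finset.card_pos, hScard]; omega
    set sR : ℝ := (s : ℝ) with hsR
    set nR : ℝ := (n : ℝ) with hnR
    have hsRpos : 0 < sR := by rw [hsR]; exact_mod_cast Nat.lt_of_lt_of_le Nat.zero_lt_one hs1
    have hnRpos : 0 < nR := by rw [hnR]; exact_mod_cast hn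
    have htRpos : 0 < nR - sR := by
      have : (s:ℝ) < (n:ℝ) := by exact_mod_cast hslt
      linarith
    have hcardS : (S.card : ℝ) = sR := by rw [hScard]
    have hcardSc : (Sᶜ.card : ℝ) = nR - sR := by
      rw [hcompl_card, Nat.cast_sub hsn]
    -- cocoercivity of each u i
    have hco : ∀ i : Fin n, ‖u i‖ ^ 2 ≤ L * ⟪u i, d⟫ := fun i =>
      coco_lemma (f' i) (hdiff i) (hconv i) L hL (hsmooth i) x y
    set uu : E := ((Sᶜ.card : ℝ))⁻¹ • ∑ i ∈ Sᶜ, u i with huu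
    set vv : E := ((S.card : ℝ))⁻¹ • ∑ i ∈ S, u i with hvv
    have hu' : ‖uu‖ ^ 2 ≤ L * ⟪uu, d⟫ :=
      avg_coco Sᶜ hcompl_ne u d L hL (fun i _ => hco i)
    have hv' : ‖vv‖ ^ 2 ≤ L * ⟪vv, d⟫ :=
      avg_coco S hS_ne u d L hL (fun i _ => hco i)
    have hkey : ∑ i, c i • u i = ((nR - sR)/nR) • (uu - vv) := by
      rw [← Finset.sum_add_sum_compl S (fun i => c i • u i)]
      have hS_part : ∑ i ∈ S, c i • u i = (1/nR - 1/sR) • ∑ i ∈ S, u i := by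
        rw [Finset.smul_sum]
        apply Finset.sum_congr rfl
        intro i hi
        simp [hc, hi]
      have hSc_part : ∑ i ∈ Sᶜ, c i • u i = (1/nR) • ∑ i ∈ Sᶜ, u i := by
        rw [Finset.smul_sum]
        apply Finset.sum_congr rfl
        intro i hi
        rw [Finset.mem_compl] at hi
        simp [hc, hi]
      rw [hS_part, hSc_part, smul_sub, huu, hvv, smul_smul, smul_smul,
        hcardS, hcardSc]
      have c1 : (nR - sR)/nR * (nR - sR)⁻¹ = 1/nR := by
        field_simp
      have c2 : (nR - sR)/nR * sR⁻¹ = -(1/nR - 1/sR) := by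
        field_simp
        ring
      rw [c1, c2, neg_smul]
      abel
    rw [hkey]
    have hbound : ‖uu - vv‖ ≤ L * ‖d‖ := two_coco_combine uu vv d L hL hu' hv'
    rw [norm_smul, Real.norm_eq_abs, abs_of_pos (by positivity : (0:ℝ) < (nR - sR)/nR)]
    have hle1 : (nR - sR)/nR ≤ 1 := by
      rw [div_le_one hnRpos]; linarith
    calc (nR - sR)/nR * ‖uu - vv‖ ≤ 1 * (L * ‖d‖) := by
          apply mul_le_mul hle1 hbound (norm_nonneg _) zero_le_one
      _ = L * ‖x - y‖ := by rw [one_mul, hd]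
end
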